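/- Let f_1,…,f_N: ℝ^d → ℝ each be convex and differentiable with L-Lipschitz gradient, let f = ∑_{i=1}^N f_i, let y_1,…,y_N ∈ ℝ^d with average ȳ = (1/N)∑_i y_i. Define f̂ = ∑_i (f_i(y_i) + ∇f_i(y_i)·(ȳ − y_i)) and ĝ = ∑_i ∇f_i(y_i). Then for all x ∈ ℝ^d: f̂ + ĝ·(x−ȳ) ≤ f(x) ≤ f̂ + ĝ·(x−ȳ) + (2NL/2)‖x−ȳ‖² + L ∑_i ‖ȳ − y_i‖². -/

import Mathlib

open scoped RealInnerProductSpace BigOperators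

variable {E : Type*} [NormedAddCommGroup E] [InnerProductSpace ℝ E] [CompleteSpace E]

lemma line_hasDerivAt (f : E → ℝ) (g : E → E)
    (hgrad : ∀ x : E, HasGradientAt f (g x) x) (y v : E) (t : ℝ) :
    HasDerivAt (fun s : ℝ => f (y + s • v)) ⟪g (y + t • v), v⟫ t := by
  have h1 : HasDerivAt (fun s : ℝ => y + s • v) v t := by
    simpa using ((hasDerivAt_id t).smul_const v).const_add y
  have h2 := (hasGradientAt_iff_hasFDerivAt.1 (hgrad (y + t • v))).comp_hasDerivAt t h1
  simp only [InnerProductSpace.toDual_apply_apply] at h2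
  exact h2

lemma aux_lower (f : E → ℝ) (g : E → E)
    (hconv : ConvexOn ℝ Set.univ f)
    (hgrad : ∀ x : E, HasGradientAt f (g x) x) (x y : E) :
    f y + ⟪g y, x - y⟫ ≤ f x := by
  set v := x - y with hv
  have hψ : ConvexOn ℝ Set.univ (fun s : ℝ => f (y + s • v)) := by
    have h := hconv.comp_affineMap (AffineMap.lineMap y x : ℝ →ᵃ[ℝ] E)
    have he : (f ∘ (AffineMap.lineMap y x : ℝ →ᵃ[ℝ] E)) = fun s : ℝ => f (y + s • v) := by
      funext s
      simp [AffineMap.lineMap_apply, hv, add_comm]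
    rw [he] at h
    simpa using h
  have hd := line_hasDerivAt f g hgrad y v 0
  have hle := hψ.le_slope_of_hasDerivAt (Set.mem_univ (0:ℝ)) (Set.mem_univ (1:ℝ))
    one_pos (by simpa using hd)
  have hslope : slope (fun s : ℝ => f (y + s • v)) 0 1 = f x - f y := by
    simp [slope_def_field, hv]
  rw [hslope] at hle
  linarith

lemma aux_upper (f : E → ℝ) (g : E → E) (L : ℝ) (hL : 0 ≤ L)
    (hgrad : ∀ x : E, HasGradientAt f (g x) x)
    (hlip : ∀ x y : E, ‖g x - g y‖ ≤ L * ‖x - y‖) (x y : E) :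
    f x ≤ f y + ⟪g y, x - y⟫ + L / 2 * ‖x - y‖ ^ 2 := by
  set v := x - y with hv
  have hcg : Continuous g := by
    have : LipschitzWith (Real.toNNReal L) g := by
      refine LipschitzWith.of_dist_le_mul fun a b => ?_
      simpa [dist_eq_norm, Real.coe_toNNReal _ hL] using hlip a b
    exact this.continuous
  have hψ' : Continuous fun t : ℝ => ⟪g (y + t • v), v⟫ := by
    exact (hcg.comp (by continuity)).inner continuous_const
  have hFTC : f (y + (1:ℝ) • v) - f (y + (0:ℝ) • v)
      = ∫ t in (0:ℝ)..1, ⟪g (y + t • v), v⟫ := by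
    refine (intervalIntegral.integral_eq_sub_of_hasDerivAt
      (fun t _ => line_hasDerivAt f g hgrad y v t) ?_).symm
    exact hψ'.intervalIntegrable 0 1
  have hbound : ∀ t ∈ Set.Icc (0:ℝ) 1,
      ⟪g (y + t • v), v⟫ ≤ ⟪g y, v⟫ + L * t * ‖v‖ ^ 2 := by
    intro t ht
    have h1 : ⟪g (y + t • v) - g y, v⟫ ≤ ‖g (y + t • v) - g y‖ * ‖v‖ :=
      real_inner_le_norm _ _
    have h2 : ‖g (y + t • v) - g y‖ ≤ L * (t * ‖v‖) := by
      have := hlip (y + t • v) y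
      simpa [norm_smul, abs_of_nonneg ht.1, mul_assoc] using this
    have h3 : ‖g (y + t • v) - g y‖ * ‖v‖ ≤ L * (t * ‖v‖) * ‖v‖ :=
      mul_le_mul_of_nonneg_right h2 (norm_nonneg _)
    have h4 : ⟪g (y + t • v), v⟫ = ⟪g y, v⟫ + ⟪g (y + t • v) - g y, v⟫ := by
      rw [inner_sub_left]; ring
    rw [h4]
    nlinarith [sq_nonneg (‖v‖)]
  have hint : (∫ t in (0:ℝ)..1, ⟪g (y + t • v), v⟫)
      ≤ ∫ t in (0:ℝ)..1, (⟪g y, v⟫ + L * t * ‖v‖ ^ 2) := by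
    refine intervalIntegral.integral_mono_on zero_le_one
      (hψ'.intervalIntegrable 0 1)
      ((continuous_const.add ((continuous_const.mul continuous_id).mul continuous_const)).intervalIntegrable 0 1) hbound
  have hval : (∫ t in (0:ℝ)..1, (⟪g y, v⟫ + L * t * ‖v‖ ^ 2)) = ⟪g y, v⟫ + L / 2 * ‖v‖ ^ 2 := by
    have he : (fun t : ℝ => ⟪g y, v⟫ + L * t * ‖v‖ ^ 2)
        = fun t : ℝ => ⟪g y, v⟫ + (L * ‖v‖ ^ 2) * t := by funext t; ring
    rw [he, intervalIntegral.integral_add (intervalIntegrable_const)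
      (IntervalIntegrable.const_mul intervalIntegral.intervalIntegrable_id _),
      intervalIntegral.integral_const_mul, integral_id]
    simp
    ring
  have hx1 : y + (1:ℝ) • v = x := by simp [hv]
  have hx0 : y + (0:ℝ) • v = y := by simp
  rw [hx1, hx0] at hFTC
  linarith [hint.trans_eq hval, hFTC.ge.trans_eq' rfl]

theorem sum_inexact_oracle
    {d N : ℕ} (hN : 0 < N)
    (f : Fin N → EuclideanSpace ℝ (Fin d) → ℝ)
    (g : Fin N → EuclideanSpace ℝ (Fin d) → EuclideanSpace ℝ (Fin d))
    (L : ℝ) (hL : 0 ≤ L)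
    (hconv : ∀ i, ConvexOn ℝ Set.univ (f i))
    (hgrad : ∀ i x, HasGradientAt (f i) (g i x) x)
    (hlip : ∀ i x y, ‖g i x - g i y‖ ≤ L * ‖x - y‖)
    (y : Fin N → EuclideanSpace ℝ (Fin d)) :
    let ybar := (N : ℝ)⁻¹ • ∑ i, y i
    let fhat := ∑ i, (f i (y i) + ⟪g i (y i), ybar - y i⟫)
    let ghat := ∑ i, g i (y i)
    ∀ x, fhat + ⟪ghat, x - ybar⟫ ≤ (∑ i, f i x) ∧
      (∑ i, f i x) ≤ fhat + ⟪ghat, x - ybar⟫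
        + (2 * (N : ℝ) * L / 2) * ‖x - ybar‖ ^ 2 + L * ∑ i, ‖ybar - y i‖ ^ 2 := by
  intro ybar fhat ghat x
  have key : fhat + ⟪ghat, x - ybar⟫ = ∑ i, (f i (y i) + ⟪g i (y i), x - y i⟫) := by
    show (∑ i, (f i (y i) + ⟪g i (y i), ybar - y i⟫)) + ⟪∑ i, g i (y i), x - ybar⟫ = _
    rw [sum_inner, ← Finset.sum_add_distrib]
    refine Finset.sum_congr rfl fun i _ => ?_
    rw [add_assoc, ← inner_add_right, sub_add_sub_cancel']
  constructor
  · rw [key]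
    exact Finset.sum_le_sum fun i _ => aux_lower (f i) (g i) (hconv i) (hgrad i) x (y i)
  · have h1 : (∑ i, f i x) ≤ ∑ i, (f i (y i) + ⟪g i (y i), x - y i⟫ + L / 2 * ‖x - y i‖ ^ 2) :=
      Finset.sum_le_sum fun i _ => aux_upper (f i) (g i) L hL (hgrad i) (hlip i) x (y i)
    have h2 : ∀ i, ‖x - y i‖ ^ 2 ≤ 2 * ‖x - ybar‖ ^ 2 + 2 * ‖ybar - y i‖ ^ 2 := by
      intro i
      have he : x - y i = (x - ybar) + (ybar - y i) := by abel
      have hn : ‖x - y i‖ ≤ ‖x - ybar‖ + ‖ybar - y i‖ := by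
        rw [he]; exact norm_add_le _ _
      nlinarith [norm_nonneg (x - y i), norm_nonneg (x - ybar), norm_nonneg (ybar - y i),
        sq_nonneg (‖x - ybar‖ - ‖ybar - y i‖)]
    have h3 : (∑ i, (L / 2 * ‖x - y i‖ ^ 2))
        ≤ ∑ i, (L / 2 * (2 * ‖x - ybar‖ ^ 2 + 2 * ‖ybar - y i‖ ^ 2)) :=
      Finset.sum_le_sum fun i _ => by
        have := h2 i
        nlinarith
    have h4 : (∑ i, (L / 2 * (2 * ‖x - ybar‖ ^ 2 + 2 * ‖ybar - y i‖ ^ 2)))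
        = (N : ℝ) * L * ‖x - ybar‖ ^ 2 + L * ∑ i, ‖ybar - y i‖ ^ 2 := by
      rw [Finset.sum_congr rfl (fun i _ => by ring :
        ∀ i ∈ Finset.univ, L / 2 * (2 * ‖x - ybar‖ ^ 2 + 2 * ‖ybar - y i‖ ^ 2)
          = L * ‖x - ybar‖ ^ 2 + L * ‖ybar - y i‖ ^ 2),
        Finset.sum_add_distrib, Finset.sum_const, ← Finset.mul_sum]
      simp [Finset.card_univ]
      ring
    have h5 : (∑ i, (f i (y i) + ⟪g i (y i), x - y i⟫ + L / 2 * ‖x - y i‖ ^ 2))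
        = (∑ i, (f i (y i) + ⟪g i (y i), x - y i⟫)) + ∑ i, (L / 2 * ‖x - y i‖ ^ 2) := by
      rw [← Finset.sum_add_distrib]
    rw [h5, ← key] at h1
    have : (2 * (N : ℝ) * L / 2) = (N : ℝ) * L := by ring
    linarith [h3.trans_eq h4]
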